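/- (Theorem 2.2, uniqueness of the optimal parameters) Fix real numbers a11, a12, a21, a22, σx, σy, R with a22 ≠ 0, R > 0, ã < 0. Let ε₀ > 0 and let a, σX², s̃ : (0, ε₀) → ℝ be bounded functions with s̃(ε) ≥ s₀ for some constant s₀ > 0, such that for each ε: (i) −s̃(ε)²/R + 2*a(ε)*s̃(ε) + σX²(ε) = 0 exactly; (ii) σX²(ε) = −2*(a(ε) − ã*(1 − ε*â))*s̃(ε) + σs(ε)² + O(ε²) as ε → 0⁺ (the manifold of Theorem 2.1); and (iii) σX²(ε) = (ã*(1 − ε*â) − a(ε))*s̃(ε) + (a(ε)/(ã*(1 − ε*â)))*σs(ε)² + O(ε²) as ε → 0⁺ (the optimality manifold). Then a(ε) = ã*(1 − ε*â) + O(ε²) and σX²(ε) = σs(ε)² + O(ε²) as ε → 0⁺. -/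

import Mathlib

/-- `f = O(ε²)` as `ε → 0⁺`, with the bound holding inside `(0, ε₀)`. -/
def IsO2 (ε₀ : ℝ) (f : ℝ → ℝ) : Prop :=
  ∃ C ε₁ : ℝ, 0 < C ∧ 0 < ε₁ ∧ ε₁ ≤ ε₀ ∧ ∀ ε, 0 < ε → ε < ε₁ → |f ε| ≤ C * ε ^ 2

/-- `σs(ε)² := σx²(1 − 2εâ) + ε σy² a12²/a22²`. -/
noncomputable def sigs (a12 a21 a22 σx σy ε : ℝ) : ℝ :=
  σx ^ 2 * (1 - 2 * ε * (a12 * a21 / a22 ^ 2)) + ε * σy ^ 2 * a12 ^ 2 / a22 ^ 2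

set_option maxHeartbeats 1000000

/-- Theorem 2.2, uniqueness of the optimal parameters: the manifold of
Theorem 2.1 together with the optimality manifold force
`a(ε) = ã(1 − εâ) + O(ε²)` and `σX²(ε) = σs(ε)² + O(ε²)`. -/
theorem stmt10 (a11 a12 a21 a22 σx σy R : ℝ) (ha22 : a22 ≠ 0) (hR : 0 < R)
    (hat : a11 - a12 * a21 / a22 < 0)
    (ε₀ : ℝ) (hε₀ : 0 < ε₀) (a sigX2 stil : ℝ → ℝ)
    (hbdd : ∃ M : ℝ, ∀ ε, 0 < ε → ε < ε₀ →
      |a ε| ≤ M ∧ |sigX2 ε| ≤ M ∧ |stil ε| ≤ M)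
    (s₀ : ℝ) (hs₀ : 0 < s₀) (hstil : ∀ ε, 0 < ε → ε < ε₀ → s₀ ≤ stil ε)
    (hric : ∀ ε, 0 < ε → ε < ε₀ →
      -(stil ε) ^ 2 / R + 2 * a ε * stil ε + sigX2 ε = 0)
    (hman : IsO2 ε₀ (fun ε =>
      sigX2 ε -
        (-2 * (a ε - (a11 - a12 * a21 / a22) * (1 - ε * (a12 * a21 / a22 ^ 2))) * stil ε
          + sigs a12 a21 a22 σx σy ε)))
    (hopt : IsO2 ε₀ (fun ε =>
      sigX2 ε -
        (((a11 - a12 * a21 / a22) * (1 - ε * (a12 * a21 / a22 ^ 2)) - a ε) * stil ε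
          + (a ε / ((a11 - a12 * a21 / a22) * (1 - ε * (a12 * a21 / a22 ^ 2))))
              * sigs a12 a21 a22 σx σy ε))) :
    IsO2 ε₀ (fun ε =>
        a ε - (a11 - a12 * a21 / a22) * (1 - ε * (a12 * a21 / a22 ^ 2))) ∧
      IsO2 ε₀ (fun ε => sigX2 ε - sigs a12 a21 a22 σx σy ε) := by
  obtain ⟨M, hM⟩ := hbdd
  obtain ⟨Cf, εf, hCf, hεfpos, hεf0, hf⟩ := hman
  obtain ⟨Cg, εg, hCg, hεgpos, hεg0, hg⟩ := hopt
  set ta := a11 - a12 * a21 / a22 with hta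
  set hb := a12 * a21 / a22 ^ 2 with hhb
  have hta0 : ta < 0 := hat
  set δ : ℝ := min (min 1 (1 / (2 * (|hb| + 1)))) (s₀ * (-ta) / (4 * Cf)) with hδdef
  have hδpos : 0 < δ := by
    refine lt_min (lt_min one_pos (by positivity)) ?_
    have h : 0 < -ta := by linarith
    positivity
  have hδ1 : δ ≤ 1 := le_trans (min_le_left _ _) (min_le_left _ _)
  have hδ2 : δ ≤ 1 / (2 * (|hb| + 1)) := le_trans (min_le_left _ _) (min_le_right _ _)
  have hδ3 : δ ≤ s₀ * (-ta) / (4 * Cf) := min_le_right _ _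
  set ε₁ : ℝ := min (min εf εg) δ with hε₁def
  have hε₁pos : 0 < ε₁ := lt_min (lt_min hεfpos hεgpos) hδpos
  have hε₁le : ε₁ ≤ ε₀ := le_trans (min_le_left _ _) (le_trans (min_le_left _ _) hεf0)
  have hε₁f : ε₁ ≤ εf := le_trans (min_le_left _ _) (min_le_left _ _)
  have hε₁g : ε₁ ≤ εg := le_trans (min_le_left _ _) (min_le_right _ _)
  have hε₁δ : ε₁ ≤ δ := min_le_right _ _
  set C₁ : ℝ := 6 * (Cf + Cg) / s₀ with hC₁def
  have hC₁pos : 0 < C₁ := by positivity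
  clear_value ta hb δ ε₁ C₁
  have key : ∀ ε, 0 < ε → ε < ε₁ →
      |a ε - ta * (1 - ε * hb)| ≤ C₁ * ε ^ 2 := by
    intro ε hε hεlt
    have hεf' : ε < εf := lt_of_lt_of_le hεlt hε₁f
    have hεg' : ε < εg := lt_of_lt_of_le hεlt hε₁g
    have hεδ : ε < δ := lt_of_lt_of_le hεlt hε₁δ
    have hε1 : ε ≤ 1 := le_of_lt (lt_of_lt_of_le hεδ hδ1)
    have hεhb0 : ε ≤ 1 / (2 * (|hb| + 1)) := le_of_lt (lt_of_lt_of_le hεδ hδ2)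
    have hεta : ε ≤ s₀ * (-ta) / (4 * Cf) := le_of_lt (lt_of_lt_of_le hεδ hδ3)
    have hε0' : ε < ε₀ := lt_of_lt_of_le hεf' hεf0
    have hrε := hric ε hε hε0'
    have hsε := hstil ε hε hε0'
    have habs0 : (0:ℝ) ≤ |hb| := abs_nonneg _
    have hεhb : ε * |hb| ≤ 1 / 2 := by
      have h2 : ε * (2 * (|hb| + 1)) ≤ 1 := by
        have hpos : (0:ℝ) < 2 * (|hb| + 1) := by positivity
        calc ε * (2 * (|hb| + 1)) ≤ (1 / (2 * (|hb| + 1))) * (2 * (|hb| + 1)) :=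
              mul_le_mul_of_nonneg_right hεhb0 hpos.le
          _ = 1 := by field_simp
      linarith
    have hu : ε * hb ≤ 1 / 2 :=
      le_trans (mul_le_mul_of_nonneg_left (le_abs_self hb) hε.le) hεhb
    have hl : -(1/2) ≤ ε * hb := by
      have h := mul_le_mul_of_nonneg_left (neg_le_abs hb) hε.le
      linarith
    have h1 : (1:ℝ)/2 ≤ 1 - ε * hb := by linarith
    have h2 : 1 - ε * hb ≤ 3/2 := by linarith
    set A : ℝ := ta * (1 - ε * hb) with hAdef
    set S : ℝ := sigs a12 a21 a22 σx σy ε with hSdef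
    set F : ℝ := sigX2 ε - (-2 * (a ε - A) * stil ε + S) with hFdef
    set G : ℝ := sigX2 ε - ((A - a ε) * stil ε + (a ε / A) * S) with hGdef
    have hfε : |F| ≤ Cf * ε ^ 2 := hf ε hε hεf'
    have hgε : |G| ≤ Cg * ε ^ 2 := hg ε hε hεg'
    clear_value A S F G
    clear hf hg hric hstil hM hδdef hε₁def hδ1 hδ2 hδ3 hεhb0
    have hAle : A ≤ ta / 2 := by
      have hp := mul_nonneg (by linarith : (0:ℝ) ≤ -ta)
        (by linarith : (0:ℝ) ≤ 1 - ε * hb - 1/2)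
      nlinarith [hp, hAdef]
    have hAneg : A < 0 := by linarith
    have hAne : A ≠ 0 := ne_of_lt hAneg
    have hAabs : |A| ≤ (3/2) * (-ta) := by
      rw [abs_of_neg hAneg]
      have hp := mul_nonneg (by linarith : (0:ℝ) ≤ -ta)
        (by linarith : (0:ℝ) ≤ 3/2 - (1 - ε * hb))
      nlinarith [hp, hAdef]
    have hsig : sigX2 ε = (stil ε) ^ 2 / R - 2 * a ε * stil ε := by
      have h : -(stil ε) ^ 2 / R = -((stil ε) ^ 2 / R) := by ring
      rw [h] at hrε
      linarith
    have hSval : S = (stil ε) ^ 2 / R - 2 * A * stil ε - F := by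
      linarith [hsig, hFdef]
    have hF4 : F ≤ s₀ * (-ta) / 4 := by
      have h3 : F ≤ Cf * ε ^ 2 := (abs_le.mp hfε).2
      have hε2 : ε ^ 2 ≤ ε := by nlinarith [mul_nonneg hε.le (by linarith : (0:ℝ) ≤ 1 - ε)]
      have h4 : Cf * ε ^ 2 ≤ Cf * ε := mul_le_mul_of_nonneg_left hε2 hCf.le
      have h5 : Cf * ε ≤ Cf * (s₀ * (-ta) / (4 * Cf)) := mul_le_mul_of_nonneg_left hεta hCf.le
      have h6 : Cf * (s₀ * (-ta) / (4 * Cf)) = s₀ * (-ta) / 4 := by field_simp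
      linarith
    have hdivpos : 0 ≤ (stil ε) ^ 2 / R := div_nonneg (sq_nonneg _) hR.le
    have hprod : (-ta / 2) * s₀ ≤ (-A) * stil ε := by
      have h := mul_le_mul (by linarith : -ta / 2 ≤ -A) hsε hs₀.le (by linarith : (0:ℝ) ≤ -A)
      linarith
    have hlow : s₀ * (-ta) / 4 ≤ stil ε * A + S := by linarith [hSval, hF4, hdivpos, hprod]
    have hKK : (F - G) * A = (a ε - A) * (stil ε * A + S) := by
      rw [hFdef, hGdef]
      field_simp
      ring
    have hFG : |(F - G) * A| ≤ (Cf + Cg) * ε ^ 2 * ((3/2) * (-ta)) := by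
      rw [abs_mul]
      have h7 : |F - G| ≤ (Cf + Cg) * ε ^ 2 := by
        calc |F - G| ≤ |F| + |G| := abs_sub _ _
          _ ≤ (Cf + Cg) * ε ^ 2 := by linarith
      exact mul_le_mul h7 hAabs (abs_nonneg _) (by positivity)
    have hlow0 : (0:ℝ) ≤ s₀ * (-ta) / 4 := by
      have h := mul_nonneg hs₀.le (by linarith : (0:ℝ) ≤ -ta)
      linarith
    have habsprod : |a ε - A| * (s₀ * (-ta) / 4) ≤ (Cf + Cg) * ε ^ 2 * ((3/2) * (-ta)) := by
      calc |a ε - A| * (s₀ * (-ta) / 4) ≤ |a ε - A| * (stil ε * A + S) :=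
            mul_le_mul_of_nonneg_left hlow (abs_nonneg _)
        _ = |a ε - A| * |stil ε * A + S| := by
            rw [abs_of_nonneg (le_trans hlow0 hlow)]
        _ = |(a ε - A) * (stil ε * A + S)| := (abs_mul _ _).symm
        _ = |(F - G) * A| := by rw [hKK]
        _ ≤ (Cf + Cg) * ε ^ 2 * ((3/2) * (-ta)) := hFG
    have h4pos : (0:ℝ) < s₀ * (-ta) / 4 := by
      have h := mul_pos hs₀ (by linarith : (0:ℝ) < -ta)
      linarith
    rw [← mul_le_mul_iff_of_pos_right h4pos]
    calc |a ε - A| * (s₀ * (-ta) / 4) ≤ (Cf + Cg) * ε ^ 2 * ((3/2) * (-ta)) := habsprod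
      _ = C₁ * ε ^ 2 * (s₀ * (-ta) / 4) := by rw [hC₁def]; field_simp; ring
  have hC₂pos : 0 < Cf + 2 * C₁ * (|M| + 1) := by
    have h := abs_nonneg M
    nlinarith
  refine ⟨⟨C₁, ε₁, hC₁pos, hε₁pos, hε₁le, key⟩,
    ⟨Cf + 2 * C₁ * (|M| + 1), ε₁, hC₂pos, hε₁pos, hε₁le, ?_⟩⟩
  intro ε hε hεlt
  have hεf' : ε < εf := lt_of_lt_of_le hεlt hε₁f
  have hε0' : ε < ε₀ := lt_of_lt_of_le hεf' hεf0
  have hfε : |sigX2 ε - (-2 * (a ε - ta * (1 - ε * hb)) * stil ε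
      + sigs a12 a21 a22 σx σy ε)| ≤ Cf * ε ^ 2 := hf ε hε hεf'
  have hkε := key ε hε hεlt
  have hMε : |stil ε| ≤ |M| + 1 := by
    have h := (hM ε hε hε0').2.2
    have h8 : M ≤ |M| := le_abs_self M
    linarith
  have hdecomp : sigX2 ε - sigs a12 a21 a22 σx σy ε =
      (sigX2 ε - (-2 * (a ε - ta * (1 - ε * hb)) * stil ε + sigs a12 a21 a22 σx σy ε))
        + (-2) * (a ε - ta * (1 - ε * hb)) * stil ε := by ring
  calc |sigX2 ε - sigs a12 a21 a22 σx σy ε|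
      = |(sigX2 ε - (-2 * (a ε - ta * (1 - ε * hb)) * stil ε + sigs a12 a21 a22 σx σy ε))
        + (-2) * (a ε - ta * (1 - ε * hb)) * stil ε| := by rw [← hdecomp]
    _ ≤ |sigX2 ε - (-2 * (a ε - ta * (1 - ε * hb)) * stil ε + sigs a12 a21 a22 σx σy ε)|
        + |(-2) * (a ε - ta * (1 - ε * hb)) * stil ε| := abs_add_le _ _
    _ ≤ Cf * ε ^ 2 + 2 * (C₁ * ε ^ 2 * (|M| + 1)) := by
        have h9 : |(-2) * (a ε - ta * (1 - ε * hb)) * stil ε|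
            = 2 * (|a ε - ta * (1 - ε * hb)| * |stil ε|) := by
          rw [abs_mul, abs_mul]
          norm_num
          ring
        have h10 : |a ε - ta * (1 - ε * hb)| * |stil ε| ≤ C₁ * ε ^ 2 * (|M| + 1) :=
          mul_le_mul hkε hMε (abs_nonneg _)
            (mul_nonneg hC₁pos.le (sq_nonneg ε))
        rw [h9]
        linarith
    _ = (Cf + 2 * C₁ * (|M| + 1)) * ε ^ 2 := by ring
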